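/- Suppose Γ ∈ F(A,B) represents the cyclic word A^rB⁻¹A^{-r}B. Then Γ is conjugate to a commutator of a basis of F(A,B) (i.e., there exists a basis (X,Y) of F(A,B) with Γ conjugate to XYX⁻¹Y⁻¹ or its inverse) if and only if |r| ≤ 1 with r ≠ 0, i.e., r = ±1. -/

import Mathlib

abbrev F2 := FreeGroup Bool

def A : F2 := FreeGroup.of true

def B : F2 := FreeGroup.of false

/-- `(x, y)` is a basis (free generating pair) of the free group `F2 = F(A,B)`. -/
def IsBasis (x y : F2) : Prop := ∃ e : F2 ≃* F2, e A = x ∧ e B = y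

/-- `w` is primitive: it is part of some basis of `F2`. -/
def IsPrimitive (w : F2) : Prop := ∃ x y : F2, IsBasis x y ∧ (w = x ∨ w = y)

/-! ### The discrete Heisenberg group -/

@[ext] structure Heis where
  x : ℤ
  y : ℤ
  z : ℤ

namespace Heis

instance : Mul Heis := ⟨fun p q => ⟨p.x + q.x, p.y + q.y, p.z + q.z + p.x * q.y⟩⟩
instance : One Heis := ⟨⟨0, 0, 0⟩⟩
instance : Inv Heis := ⟨fun p => ⟨-p.x, -p.y, -p.z + p.x * p.y⟩⟩

@[simp] lemma mul_x (p q : Heis) : (p * q).x = p.x + q.x := rfl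
@[simp] lemma mul_y (p q : Heis) : (p * q).y = p.y + q.y := rfl
@[simp] lemma mul_z (p q : Heis) : (p * q).z = p.z + q.z + p.x * q.y := rfl
@[simp] lemma one_x : (1 : Heis).x = 0 := rfl
@[simp] lemma one_y : (1 : Heis).y = 0 := rfl
@[simp] lemma one_z : (1 : Heis).z = 0 := rfl
@[simp] lemma inv_x (p : Heis) : (p⁻¹).x = -p.x := rfl
@[simp] lemma inv_y (p : Heis) : (p⁻¹).y = -p.y := rfl
@[simp] lemma inv_z (p : Heis) : (p⁻¹).z = -p.z + p.x * p.y := rfl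

instance : Group Heis where
  mul_assoc := by intros; ext <;> simp <;> ring
  one_mul := by intros; ext <;> simp
  mul_one := by intros; ext <;> simp
  inv_mul_cancel := by intros; ext <;> simp <;> ring

/-- conjugation fixes elements with trivial abelianized part -/
lemma conj_central (g p : Heis) (hx : p.x = 0) (hy : p.y = 0) :
    g * p * g⁻¹ = p := by ext <;> simp [hx, hy] <;> ring

lemma comm_eq (u v : Heis) :
    u * v * u⁻¹ * v⁻¹ = ⟨0, 0, u.x * v.y - u.y * v.x⟩ := by
  ext <;> simp <;> ring

lemma e₁_zpow (n : ℤ) : (⟨1, 0, 0⟩ : Heis) ^ n = ⟨n, 0, 0⟩ := by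
  induction n using Int.induction_on with
  | zero => rfl
  | succ k ih => rw [zpow_add_one, ih]; ext <;> simp <;> omega
  | pred k ih => rw [zpow_sub_one, ih]; ext <;> simp <;> omega

end Heis

/-! ### The homomorphism `F2 → Heis` and exponent-sum functions -/

def φ : F2 →* Heis := FreeGroup.lift (fun t => if t then ⟨1, 0, 0⟩ else ⟨0, 1, 0⟩)

@[simp] lemma φ_A : φ A = ⟨1, 0, 0⟩ := by simp [φ, A]
@[simp] lemma φ_B : φ B = ⟨0, 1, 0⟩ := by simp [φ, B]

def aa (w : F2) : ℤ := (φ w).x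
def bb (w : F2) : ℤ := (φ w).y

@[simp] lemma aa_one : aa 1 = 0 := by simp [aa]
@[simp] lemma bb_one : bb 1 = 0 := by simp [bb]
@[simp] lemma aa_mul (u v : F2) : aa (u * v) = aa u + aa v := by simp [aa]
@[simp] lemma bb_mul (u v : F2) : bb (u * v) = bb u + bb v := by simp [bb]
@[simp] lemma aa_inv (u : F2) : aa u⁻¹ = -aa u := by simp [aa]
@[simp] lemma bb_inv (u : F2) : bb u⁻¹ = -bb u := by simp [bb]
@[simp] lemma aa_of (t : Bool) : aa (FreeGroup.of t) = if t then 1 else 0 := by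
  cases t <;> simp [aa, φ]
@[simp] lemma bb_of (t : Bool) : bb (FreeGroup.of t) = if t then 0 else 1 := by
  cases t <;> simp [bb, φ]
@[simp] lemma aa_A : aa A = 1 := by simp [A]
@[simp] lemma aa_B : aa B = 0 := by simp [B]
@[simp] lemma bb_A : bb A = 0 := by simp [A]
@[simp] lemma bb_B : bb B = 1 := by simp [B]

/-- Linear expansion of exponent sums through an endomorphism. -/
lemma expand (g : F2 →* F2) (w : F2) :
    aa (g w) = aa (g A) * aa w + aa (g B) * bb w ∧
    bb (g w) = bb (g A) * aa w + bb (g B) * bb w := by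
  induction w using FreeGroup.induction_on with
  | C1 => simp
  | of t =>
    have hp : (pure t : F2) = FreeGroup.of t := rfl
    cases t <;> simp [hp, A, B]
  | inv_of t ih =>
    obtain ⟨h1, h2⟩ := ih
    constructor <;> simp [map_inv, h1, h2] <;> ring
  | mul u v ihu ihv =>
    obtain ⟨h1, h2⟩ := ihu
    obtain ⟨h3, h4⟩ := ihv
    constructor <;> simp [map_mul, h1, h2, h3, h4] <;> ring

/-- The determinant of the abelianization of an automorphism is `±1`. -/
lemma det_pm_one (e : F2 ≃* F2) (X Y : F2) (hX : e A = X) (hY : e B = Y) :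
    aa X * bb Y - bb X * aa Y = 1 ∨ aa X * bb Y - bb X * aa Y = -1 := by
  set g : F2 →* F2 := e.symm.toMonoidHom with hg
  have hgX : g X = A := by rw [hg, ← hX]; exact e.symm_apply_apply A
  have hgY : g Y = B := by rw [hg, ← hY]; exact e.symm_apply_apply B
  have h1 := expand g X
  have h2 := expand g Y
  rw [hgX] at h1
  rw [hgY] at h2
  obtain ⟨e1, e2⟩ := h1
  obtain ⟨e3, e4⟩ := h2
  simp only [aa_A, bb_A, aa_B, bb_B] at e1 e2 e3 e4
  set p := aa (g A); set q := bb (g A); set s := aa (g B); set t := bb (g B)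
  have key : (aa X * bb Y - bb X * aa Y) * (p * t - s * q) = 1 := by
    have : (aa X * bb Y - bb X * aa Y) * (p * t - s * q) =
        (p * aa X + s * bb X) * (q * aa Y + t * bb Y)
          - (p * aa Y + s * bb Y) * (q * aa X + t * bb X) := by ring
    rw [this, ← e1, ← e2, ← e3, ← e4]; ring
  rcases Int.isUnit_iff.mp (IsUnit.of_mul_eq_one _ key) with h | h
  · exact Or.inl h
  · exact Or.inr h

lemma φ_Γ (r : ℤ) : φ (A ^ r * B⁻¹ * A ^ (-r) * B) = ⟨0, 0, -r⟩ := by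
  simp only [map_mul, map_inv, map_zpow, φ_A, φ_B, Heis.e₁_zpow]
  ext <;> simp <;> ring

/-- A basis obtained from an involutive substitution on the generators. -/
lemma isBasis_of_invol (u v : F2)
    (h : (FreeGroup.lift (fun t : Bool => if t then u else v)).comp
          (FreeGroup.lift (fun t : Bool => if t then u else v)) = MonoidHom.id F2) :
    IsBasis u v := by
  set f := FreeGroup.lift (fun t : Bool => if t then u else v) with hf
  refine ⟨{ toFun := (f : F2 → F2), invFun := (f : F2 → F2),
            left_inv := fun w => by
              have := DFunLike.congr_fun h w
              simpa using this,
            right_inv := fun w => by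
              have := DFunLike.congr_fun h w
              simpa using this,
            map_mul' := map_mul f }, ?_, ?_⟩
  · show f A = u; simp [hf, A]
  · show f B = v; simp [hf, B]

theorem stmt_15 (r : ℤ) (Γ : F2) (hΓ : Γ = A ^ r * B⁻¹ * A ^ (-r) * B) :
    (∃ X Y : F2, IsBasis X Y ∧
        (IsConj Γ (X * Y * X⁻¹ * Y⁻¹) ∨ IsConj Γ (Y * X * Y⁻¹ * X⁻¹))) ↔
      (r = 1 ∨ r = -1) := by
  constructor
  · rintro ⟨X, Y, ⟨e, hX, hY⟩, hc⟩
    have hφΓ : φ Γ = ⟨0, 0, -r⟩ := by rw [hΓ]; exact φ_Γ r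
    have hD := det_pm_one e X Y hX hY
    have key : ∀ W : F2, IsConj Γ W → φ W = ⟨0, 0, -r⟩ := by
      intro W hW
      obtain ⟨c, hc'⟩ := isConj_iff.mp hW
      have : φ c * φ Γ * (φ c)⁻¹ = φ W := by
        rw [← map_inv, ← map_mul, ← map_mul, hc']
      rw [← this, hφΓ, Heis.conj_central] <;> rfl
    rcases hc with h | h
    · have := key _ h
      simp only [map_mul, map_inv] at this; rw [Heis.comm_eq] at this
      have hz : aa X * bb Y - bb X * aa Y = -r := by
        have h' := congrArg Heis.z this
        simpa [aa, bb] using h'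
      omega
    · have := key _ h
      simp only [map_mul, map_inv] at this; rw [Heis.comm_eq] at this
      have hz : aa Y * bb X - bb Y * aa X = -r := by
        have h' := congrArg Heis.z this
        simpa [aa, bb] using h'
      have hz' : aa X * bb Y - bb X * aa Y = r := by linear_combination -hz
      omega
  · rintro (rfl | rfl)
    · refine ⟨A, B⁻¹, ?_, Or.inl ?_⟩
      · apply isBasis_of_invol
        apply FreeGroup.ext_hom
        intro t
        cases t <;> simp [A, B]
      · have : Γ = A * B⁻¹ * A⁻¹ * (B⁻¹)⁻¹ := by
          rw [hΓ]; group
        rw [this]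
    · refine ⟨A⁻¹, B⁻¹, ?_, Or.inl ?_⟩
      · apply isBasis_of_invol
        apply FreeGroup.ext_hom
        intro t
        cases t <;> simp [A, B]
      · have : Γ = A⁻¹ * B⁻¹ * (A⁻¹)⁻¹ * (B⁻¹)⁻¹ := by
          rw [hΓ]; group
        rw [this]
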